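/- Let y ≤ x, 0 ≤ s ≤ t with (t−s)^{1/2} < x − y, and all quantities in [0,1]. Then s·(x−y)·∫₀ˢ ∫_ℝ (P_{t−s+r} 1_{[y,x]} − P_r 1_{[y,x]})²(z) dz dr ≤ (8/3)(t−s)^{3/2}(x−y) ≤ (8/3)(t−s)^{5/4}(x−y)^{5/4}. -/

import Mathlib

open MeasureTheory Real Filter

noncomputable def heatKernel (t x : ℝ) : ℝ :=
  (1 / Real.sqrt (2 * Real.pi * t)) * Real.exp (-x ^ 2 / (2 * t))

lemma hk_nonneg (t x : ℝ) : 0 ≤ heatKernel t x := by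
  unfold heatKernel
  positivity

lemma hk_cont (t : ℝ) : Continuous (heatKernel t) := by
  unfold heatKernel
  fun_prop

lemma hk_eq_gauss {t : ℝ} (ht : 0 < t) :
    heatKernel t = ProbabilityTheory.gaussianPDFReal 0 ⟨t, ht.le⟩ := by
  funext z
  simp [heatKernel, ProbabilityTheory.gaussianPDFReal]
  rfl

lemma hk_integrable {t : ℝ} (ht : 0 < t) : Integrable (heatKernel t) := by
  rw [hk_eq_gauss ht]
  exact ProbabilityTheory.integrable_gaussianPDFReal 0 _

lemma hk_integral {t : ℝ} (ht : 0 < t) : ∫ z, heatKernel t z = 1 := by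
  rw [hk_eq_gauss ht]
  exact ProbabilityTheory.integral_gaussianPDFReal_eq_one 0 (fun h => ht.ne' (congrArg NNReal.toReal h))

lemma hk_sub_integrable {t : ℝ} (ht : 0 < t) (p : ℝ) :
    Integrable fun z => heatKernel t (z - p) :=
  (hk_integrable ht).comp_sub_right p

lemma hk_sub_integral {t : ℝ} (ht : 0 < t) (p : ℝ) :
    ∫ z, heatKernel t (z - p) = 1 := by
  rw [integral_sub_right_eq_self (heatKernel t) p]
  exact hk_integral ht

lemma hk_le {t : ℝ} (ht : 0 < t) (z : ℝ) :
    heatKernel t z ≤ 1 / Real.sqrt (2 * Real.pi * t) := by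
  unfold heatKernel
  have h1 : Real.exp (-z ^ 2 / (2 * t)) ≤ 1 := by
    rw [Real.exp_le_one_iff]
    have h2 : (0:ℝ) ≤ z ^ 2 / (2 * t) := by positivity
    have : -z ^ 2 / (2 * t) = -(z ^ 2 / (2 * t)) := by ring
    linarith [this]
  exact mul_le_of_le_one_right (by positivity) h1

lemma hk_conv {a b : ℝ} (ha : 0 < a) (hb : 0 < b) (p q : ℝ) :
    ∫ z, heatKernel a (z - p) * heatKernel b (z - q)
      = heatKernel (a + b) (p - q) := by
  have hab : 0 < a + b := by linarith
  have hv : 0 < a * b / (a + b) := by positivity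
  have key : ∀ z, heatKernel a (z - p) * heatKernel b (z - q)
      = heatKernel (a + b) (p - q)
        * heatKernel (a * b / (a + b)) (z - (b * p + a * q) / (a + b)) := by
    intro z
    unfold heatKernel
    have hpi : 0 < Real.pi := Real.pi_pos
    have hs : Real.sqrt (2 * Real.pi * a) * Real.sqrt (2 * Real.pi * b)
        = Real.sqrt (2 * Real.pi * (a + b)) * Real.sqrt (2 * Real.pi * (a * b / (a + b))) := by
      rw [← Real.sqrt_mul (by positivity), ← Real.sqrt_mul (by positivity)]
      congr 1
      field_simp
    have he : Real.exp (-(z - p) ^ 2 / (2 * a)) * Real.exp (-(z - q) ^ 2 / (2 * b))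
        = Real.exp (-(p - q) ^ 2 / (2 * (a + b)))
          * Real.exp (-(z - (b * p + a * q) / (a + b)) ^ 2 / (2 * (a * b / (a + b)))) := by
      rw [← Real.exp_add, ← Real.exp_add]
      congr 1
      field_simp
      ring
    calc (1 / Real.sqrt (2 * Real.pi * a)) * Real.exp (-(z - p) ^ 2 / (2 * a)) *
          ((1 / Real.sqrt (2 * Real.pi * b)) * Real.exp (-(z - q) ^ 2 / (2 * b)))
        = (1 / (Real.sqrt (2 * Real.pi * a) * Real.sqrt (2 * Real.pi * b))) *
          (Real.exp (-(z - p) ^ 2 / (2 * a)) * Real.exp (-(z - q) ^ 2 / (2 * b))) := by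
          ring
      _ = _ := by rw [hs, he]; ring
  simp_rw [key]
  rw [integral_const_mul, integral_sub_right_eq_self
    (heatKernel (a * b / (a + b))) ((b * p + a * q) / (a + b)), hk_integral hv, mul_one]

lemma hk_conv_integrable {a b : ℝ} (ha : 0 < a) (hb : 0 < b) (p q : ℝ) :
    Integrable fun z => heatKernel b (z - q) * heatKernel a (z - p) :=
  (hk_sub_integrable ha p).bdd_mul (c := 1 / Real.sqrt (2 * Real.pi * b))
    (((hk_cont b).comp (continuous_id.sub continuous_const)).aestronglyMeasurable)
    (.of_forall fun z => by
      rw [Real.norm_eq_abs, abs_of_nonneg (hk_nonneg _ _)]; exact hk_le hb _)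
noncomputable section

def mfn (y x h : ℝ) : ℝ := max (x - y - |h|) 0

noncomputable def psi (y x v : ℝ) : ℝ := ∫ z, heatKernel 1 z * mfn y x (v * z)

noncomputable def phi (y x u : ℝ) : ℝ := psi y x (Real.sqrt u)

lemma mfn_nonneg (y x h : ℝ) : 0 ≤ mfn y x h := le_max_right _ _

lemma mfn_le {y x : ℝ} (hyx : y ≤ x) (h : ℝ) : mfn y x h ≤ x - y :=
  max_le (by linarith [abs_nonneg h]) (by linarith)

lemma mfn_lip (y x h h' : ℝ) : |mfn y x h - mfn y x h'| ≤ |h - h'| := by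
  unfold mfn
  calc |max (x - y - |h|) 0 - max (x - y - |h'|) 0|
      ≤ |(x - y - |h|) - (x - y - |h'|)| := abs_max_sub_max_le_abs _ _ _
    _ = |(|h'| - |h|)|  := by congr 1; ring
    _ ≤ |h' - h| := abs_abs_sub_abs_le_abs_sub h' h
    _ = |h - h'| := abs_sub_comm h' h

lemma mfn_cont (y x : ℝ) : Continuous (mfn y x) := by
  unfold mfn; fun_prop

lemma psi_integrand_integrable {y x : ℝ} (hyx : y ≤ x) (v : ℝ) :
    Integrable fun z => heatKernel 1 z * mfn y x (v * z) := by
  have hm : AEStronglyMeasurable (fun z => mfn y x (v * z)) volume :=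
    ((mfn_cont y x).comp (continuous_const.mul continuous_id)).aestronglyMeasurable
  have h := (hk_integrable one_pos).bdd_mul (c := x - y) hm
    (.of_forall fun z => by
      rw [Real.norm_eq_abs, abs_of_nonneg (mfn_nonneg _ _ _)]; exact mfn_le hyx _)
  simpa [mul_comm] using h

lemma abs_le_exp_quarter (z : ℝ) : |z| ≤ Real.exp (z ^ 2 / 4) := by
  have h1 : |z| ≤ 1 + z ^ 2 / 4 := by nlinarith [sq_abs z, sq_nonneg (|z| - 2)]
  have h2 : 1 + z ^ 2 / 4 ≤ Real.exp (z ^ 2 / 4) := by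
    linarith [Real.add_one_le_exp (z ^ 2 / 4)]
  linarith

lemma psi_diff {y x : ℝ} (hyx : y ≤ x) (v v' : ℝ) :
    |psi y x v - psi y x v'| ≤ Real.sqrt 2 * |v - v'| := by
  unfold psi
  rw [← integral_sub (psi_integrand_integrable hyx v) (psi_integrand_integrable hyx v')]
  have hbd : ∀ z, |heatKernel 1 z * mfn y x (v * z) - heatKernel 1 z * mfn y x (v' * z)|
      ≤ |v - v'| * ((1 / Real.sqrt (2 * Real.pi)) * Real.exp (-(1/4) * z ^ 2)) := by
    intro z
    rw [← mul_sub, abs_mul, abs_of_nonneg (hk_nonneg _ _)]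
    have h1 : |mfn y x (v * z) - mfn y x (v' * z)| ≤ |v - v'| * |z| := by
      calc |mfn y x (v * z) - mfn y x (v' * z)| ≤ |v * z - v' * z| := mfn_lip y x _ _
        _ = |v - v'| * |z| := by rw [← sub_mul, abs_mul]
    calc heatKernel 1 z * |mfn y x (v * z) - mfn y x (v' * z)|
        ≤ heatKernel 1 z * (|v - v'| * |z|) :=
          mul_le_mul_of_nonneg_left h1 (hk_nonneg _ _)
      _ ≤ |v - v'| * ((1 / Real.sqrt (2 * Real.pi)) * Real.exp (-(1/4) * z ^ 2)) := by
          unfold heatKernel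
          have h2 : |z| * Real.exp (-z ^ 2 / (2 * 1)) ≤ Real.exp (-(1/4) * z ^ 2) := by
            have := abs_le_exp_quarter z
            calc |z| * Real.exp (-z ^ 2 / (2 * 1))
                ≤ Real.exp (z ^ 2 / 4) * Real.exp (-z ^ 2 / (2 * 1)) :=
                  mul_le_mul_of_nonneg_right this (Real.exp_nonneg _)
              _ = Real.exp (-(1/4) * z ^ 2) := by rw [← Real.exp_add]; ring_nf
          have hpos : 0 ≤ 1 / Real.sqrt (2 * Real.pi * 1) := by positivity
          have := mul_le_mul_of_nonneg_left h2 hpos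
          calc (1 / Real.sqrt (2 * Real.pi * 1)) * Real.exp (-z ^ 2 / (2 * 1)) * (|v - v'| * |z|)
              = |v - v'| * ((1 / Real.sqrt (2 * Real.pi * 1)) * (|z| * Real.exp (-z ^ 2 / (2 * 1)))) := by
                ring
            _ ≤ |v - v'| * ((1 / Real.sqrt (2 * Real.pi * 1)) * Real.exp (-(1/4) * z ^ 2)) :=
                mul_le_mul_of_nonneg_left (by nlinarith) (abs_nonneg _)
            _ = |v - v'| * ((1 / Real.sqrt (2 * Real.pi)) * Real.exp (-(1/4) * z ^ 2)) := by
                norm_num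
  calc |∫ z, (heatKernel 1 z * mfn y x (v * z) - heatKernel 1 z * mfn y x (v' * z))|
      ≤ ∫ z, |heatKernel 1 z * mfn y x (v * z) - heatKernel 1 z * mfn y x (v' * z)| := by
        simpa [Real.norm_eq_abs] using
          norm_integral_le_integral_norm
            (fun z => heatKernel 1 z * mfn y x (v * z) - heatKernel 1 z * mfn y x (v' * z))
    _ ≤ ∫ z, |v - v'| * ((1 / Real.sqrt (2 * Real.pi)) * Real.exp (-(1/4) * z ^ 2)) := by
        refine integral_mono ?_ ?_ hbd
        · exact ((psi_integrand_integrable hyx v).sub (psi_integrand_integrable hyx v')).abs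
        · exact (((integrable_exp_neg_mul_sq (by norm_num : (0:ℝ) < 1/4)).const_mul _).const_mul _)
    _ = Real.sqrt 2 * |v - v'| := by
        rw [integral_const_mul, integral_const_mul, integral_gaussian]
        have : Real.sqrt (Real.pi / (1/4)) = Real.sqrt 2 * Real.sqrt (2 * Real.pi) := by
          rw [← Real.sqrt_mul (by norm_num)]
          congr 1
          ring
        rw [this]
        have hpi : 0 < Real.sqrt (2 * Real.pi) := Real.sqrt_pos.mpr (by positivity)
        field_simp
lemma psi_cont {y x : ℝ} (hyx : y ≤ x) : Continuous (psi y x) := by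
  have hlip : LipschitzWith 2 (psi y x) := by
    refine LipschitzWith.of_dist_le_mul fun v v' => ?_
    rw [Real.dist_eq, Real.dist_eq]
    push_cast
    have h1 := psi_diff hyx v v'
    have h2 : Real.sqrt 2 ≤ 2 := by
      nlinarith [Real.sq_sqrt (by norm_num : (0:ℝ) ≤ 2), Real.sqrt_nonneg 2]
    have h3 : (0:ℝ) ≤ |v - v'| := abs_nonneg _
    nlinarith
  exact hlip.continuous

lemma phi_cont {y x : ℝ} (hyx : y ≤ x) : Continuous (phi y x) :=
  (psi_cont hyx).comp Real.continuous_sqrt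

lemma sqrt_add_le (u c : ℝ) (hu : 0 ≤ u) (hc : 0 ≤ c) :
    Real.sqrt (u + c) ≤ Real.sqrt u + Real.sqrt c := by
  nlinarith [Real.sq_sqrt (by linarith : (0:ℝ) ≤ u + c), Real.sq_sqrt hu, Real.sq_sqrt hc,
    Real.sqrt_nonneg (u + c), Real.sqrt_nonneg u, Real.sqrt_nonneg c,
    mul_nonneg (Real.sqrt_nonneg u) (Real.sqrt_nonneg c)]

lemma phi_diff {y x : ℝ} (hyx : y ≤ x) {u c : ℝ} (hu : 0 ≤ u) (hc : 0 ≤ c) :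
    |phi y x (u + c) - phi y x u| ≤ Real.sqrt 2 * Real.sqrt c := by
  unfold phi
  calc |psi y x (Real.sqrt (u + c)) - psi y x (Real.sqrt u)|
      ≤ Real.sqrt 2 * |Real.sqrt (u + c) - Real.sqrt u| := psi_diff hyx _ _
    _ ≤ Real.sqrt 2 * Real.sqrt c := by
        refine mul_le_mul_of_nonneg_left ?_ (Real.sqrt_nonneg 2)
        rw [abs_of_nonneg (by linarith [Real.sqrt_le_sqrt (by linarith : u ≤ u + c)])]
        linarith [sqrt_add_le u c hu hc]
noncomputable def heatP (t : ℝ) (f : ℝ → ℝ) (x : ℝ) : ℝ :=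
  if t = 0 then f x else ∫ y : ℝ, heatKernel t (x - y) * f y

section heatPlemmas

variable {y x : ℝ}

lemma hk_meas (t : ℝ) : Measurable fun w => ENNReal.ofReal (heatKernel t w) :=
  ENNReal.measurable_ofReal.comp (hk_cont t).measurable

lemma heatP_eq {u : ℝ} (hu : u ≠ 0) (z : ℝ) :
    heatP u ((Set.Icc y x).indicator 1) z = ∫ w in Set.Icc y x, heatKernel u (z - w) := by
  unfold heatP
  rw [if_neg hu, ← integral_indicator measurableSet_Icc]
  congr 1
  funext w
  by_cases hw : w ∈ Set.Icc y x <;>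
    simp [Set.indicator_of_mem, Set.indicator_of_notMem, hw]

lemma hk_sub_integrable' {u : ℝ} (hu : 0 < u) (z : ℝ) :
    Integrable fun w => heatKernel u (z - w) := by
  have h := ((hk_integrable hu).comp_sub_right (-z)).comp_neg
  simpa [sub_eq_add_neg, add_comm, neg_add_eq_sub] using h

lemma hk_sub_integral' {u : ℝ} (hu : 0 < u) (z : ℝ) :
    ∫ w, heatKernel u (z - w) = 1 := by
  rw [integral_sub_left_eq_self (heatKernel u) volume z]
  exact hk_integral hu

lemma heatP_nonneg {u : ℝ} (hu : u ≠ 0) (z : ℝ) :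
    0 ≤ heatP u ((Set.Icc y x).indicator 1) z := by
  rw [heatP_eq hu]
  exact setIntegral_nonneg measurableSet_Icc fun w _ => hk_nonneg _ _

lemma heatP_le_one {u : ℝ} (hu : 0 < u) (z : ℝ) :
    heatP u ((Set.Icc y x).indicator 1) z ≤ 1 := by
  rw [heatP_eq hu.ne']
  calc ∫ w in Set.Icc y x, heatKernel u (z - w)
      ≤ ∫ w, heatKernel u (z - w) :=
        setIntegral_le_integral (hk_sub_integrable' hu z)
          (.of_forall fun w => hk_nonneg _ _)
    _ = 1 := hk_sub_integral' hu z

lemma heatP_aesm {u : ℝ} (hu : 0 < u) :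
    AEStronglyMeasurable (heatP u ((Set.Icc y x).indicator 1)) volume := by
  have heq : heatP u ((Set.Icc y x).indicator 1)
      = fun z => ∫ w in Set.Icc y x, heatKernel u (z - w) := funext (heatP_eq hu.ne')
  rw [heq]
  exact (Continuous.aestronglyMeasurable
    ((hk_cont u).comp (continuous_fst.sub continuous_snd))).integral_prod_right'

lemma hk_ofReal_heatP {u : ℝ} (hu : 0 < u) (z : ℝ) :
    ENNReal.ofReal (heatP u ((Set.Icc y x).indicator 1) z)
      = ∫⁻ w in Set.Icc y x, ENNReal.ofReal (heatKernel u (z - w)) := by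
  rw [heatP_eq hu.ne']
  exact ofReal_integral_eq_lintegral_ofReal ((hk_sub_integrable' hu z).integrableOn)
    (.of_forall fun w => hk_nonneg _ _)

lemma lintegral_hk_sub {u : ℝ} (hu : 0 < u) (w : ℝ) :
    ∫⁻ z, ENNReal.ofReal (heatKernel u (z - w)) = 1 := by
  rw [← ofReal_integral_eq_lintegral_ofReal (hk_sub_integrable hu w)
    (.of_forall fun z => hk_nonneg _ _), hk_sub_integral hu w, ENNReal.ofReal_one]

lemma heatP_integrable (hyx : y ≤ x) {u : ℝ} (hu : 0 < u) :
    Integrable (heatP u ((Set.Icc y x).indicator 1)) := by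
  refine ⟨heatP_aesm hu, ?_⟩
  rw [hasFiniteIntegral_iff_norm]
  have h1 : ∀ z, ENNReal.ofReal ‖heatP u ((Set.Icc y x).indicator 1) z‖
      = ∫⁻ w in Set.Icc y x, ENNReal.ofReal (heatKernel u (z - w)) := by
    intro z
    rw [Real.norm_of_nonneg (heatP_nonneg hu.ne' z)]
    exact hk_ofReal_heatP hu z
  simp_rw [h1]
  have hmeas : AEMeasurable (Function.uncurry fun z w => ENNReal.ofReal (heatKernel u (z - w)))
      (volume.prod (volume.restrict (Set.Icc y x))) :=
    ((hk_meas u).comp (measurable_fst.sub measurable_snd)).aemeasurable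
  rw [lintegral_lintegral_swap hmeas]
  have h2 : ∀ w, ∫⁻ z, ENNReal.ofReal (heatKernel u (z - w)) = 1 := lintegral_hk_sub hu
  simp_rw [h2]
  simp [Real.volume_Icc]

lemma heatP_mul_integrable (hyx : y ≤ x) {a b : ℝ} (ha : 0 < a) (hb : 0 < b) :
    Integrable (fun z => heatP a ((Set.Icc y x).indicator 1) z
      * heatP b ((Set.Icc y x).indicator 1) z) := by
  refine (heatP_integrable hyx ha).mono' ((heatP_aesm ha).mul (heatP_aesm hb)) ?_
  refine .of_forall fun z => ?_
  rw [Real.norm_eq_abs, abs_of_nonneg (mul_nonneg (heatP_nonneg ha.ne' z) (heatP_nonneg hb.ne' z))]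
  calc heatP a ((Set.Icc y x).indicator 1) z * heatP b ((Set.Icc y x).indicator 1) z
      ≤ heatP a ((Set.Icc y x).indicator 1) z * 1 :=
        mul_le_mul_of_nonneg_left (heatP_le_one hb z) (heatP_nonneg ha.ne' z)
    _ = heatP a ((Set.Icc y x).indicator 1) z := mul_one _

lemma restr_finite : IsFiniteMeasure (volume.restrict (Set.Icc y x)) := by
  constructor
  rw [Measure.restrict_apply_univ, Real.volume_Icc]
  exact ENNReal.ofReal_lt_top

lemma cross (hyx : y ≤ x) {a b : ℝ} (ha : 0 < a) (hb : 0 < b) :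
    ∫ z, heatP a ((Set.Icc y x).indicator 1) z * heatP b ((Set.Icc y x).indicator 1) z
      = ∫ p in Set.Icc y x, ∫ q in Set.Icc y x, heatKernel (a + b) (p - q) := by
  haveI := restr_finite (y := y) (x := x)
  have hab : 0 < a + b := by linarith
  set I := Set.Icc y x with hI
  have hL : 0 ≤ ∫ z, heatP a (I.indicator 1) z * heatP b (I.indicator 1) z :=
    integral_nonneg fun z => mul_nonneg (heatP_nonneg ha.ne' z) (heatP_nonneg hb.ne' z)
  have hR : 0 ≤ ∫ p in I, ∫ q in I, heatKernel (a + b) (p - q) :=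
    setIntegral_nonneg measurableSet_Icc fun p _ =>
      setIntegral_nonneg measurableSet_Icc fun q _ => hk_nonneg _ _
  -- measurability helpers
  have mka : Measurable fun zp : ℝ × ℝ => ENNReal.ofReal (heatKernel a (zp.1 - zp.2)) :=
    (hk_meas a).comp (measurable_fst.sub measurable_snd)
  have mkb : Measurable fun zp : ℝ × ℝ => ENNReal.ofReal (heatKernel b (zp.1 - zp.2)) :=
    (hk_meas b).comp (measurable_fst.sub measurable_snd)
  have mB : Measurable fun z => ∫⁻ q in I, ENNReal.ofReal (heatKernel b (z - q)) :=
    Measurable.lintegral_prod_right' mkb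
  -- ENNReal-valued computation
  have key : ∫⁻ z, (∫⁻ p in I, ENNReal.ofReal (heatKernel a (z - p)))
        * ∫⁻ q in I, ENNReal.ofReal (heatKernel b (z - q))
      = ∫⁻ p in I, ∫⁻ q in I, ENNReal.ofReal (heatKernel (a + b) (p - q)) := by
    have hma : ∀ z : ℝ, AEMeasurable (fun p => ENNReal.ofReal (heatKernel a (z - p)))
        (volume.restrict I) := fun z =>
      ((hk_meas a).comp (measurable_const.sub measurable_id)).aemeasurable
    have hmb : ∀ z : ℝ, AEMeasurable (fun q => ENNReal.ofReal (heatKernel b (z - q)))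
        (volume.restrict I) := fun z =>
      ((hk_meas b).comp (measurable_const.sub measurable_id)).aemeasurable
    have hstep : ∀ z, (∫⁻ p in I, ENNReal.ofReal (heatKernel a (z - p)))
        * ∫⁻ q in I, ENNReal.ofReal (heatKernel b (z - q))
        = ∫⁻ p in I, ENNReal.ofReal (heatKernel a (z - p))
            * ∫⁻ q in I, ENNReal.ofReal (heatKernel b (z - q)) := fun z =>
      (lintegral_mul_const'' _ (hma z)).symm
    simp_rw [hstep]
    rw [lintegral_lintegral_swap (by
      exact (mka.mul (mB.comp measurable_fst)).aemeasurable)]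
    have hstep2 : ∀ p, ∫⁻ z, ENNReal.ofReal (heatKernel a (z - p))
          * ∫⁻ q in I, ENNReal.ofReal (heatKernel b (z - q))
        = ∫⁻ q in I, ∫⁻ z, ENNReal.ofReal (heatKernel a (z - p))
            * ENNReal.ofReal (heatKernel b (z - q)) := by
      intro p
      have : ∀ z, ENNReal.ofReal (heatKernel a (z - p))
          * ∫⁻ q in I, ENNReal.ofReal (heatKernel b (z - q))
          = ∫⁻ q in I, ENNReal.ofReal (heatKernel a (z - p))
              * ENNReal.ofReal (heatKernel b (z - q)) := fun z =>
        (lintegral_const_mul'' _ (hmb z)).symm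
      simp_rw [this]
      exact lintegral_lintegral_swap (by
        exact ((mka.comp (measurable_fst.prodMk (measurable_const : Measurable fun _ : ℝ × ℝ => p))).mul
          mkb).aemeasurable)
    simp_rw [hstep2]
    have hconv : ∀ p q : ℝ, ∫⁻ z, ENNReal.ofReal (heatKernel a (z - p))
        * ENNReal.ofReal (heatKernel b (z - q)) = ENNReal.ofReal (heatKernel (a + b) (p - q)) := by
      intro p q
      have hint : Integrable fun z => heatKernel a (z - p) * heatKernel b (z - q) := by
        have h := hk_conv_integrable ha hb p q
        have : (fun z => heatKernel b (z - q) * heatKernel a (z - p))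
            = fun z => heatKernel a (z - p) * heatKernel b (z - q) := by
          funext z; ring
        rwa [this] at h
      have h1 : ∀ z : ℝ, ENNReal.ofReal (heatKernel a (z - p)) * ENNReal.ofReal (heatKernel b (z - q))
          = ENNReal.ofReal (heatKernel a (z - p) * heatKernel b (z - q)) := fun z =>
        (ENNReal.ofReal_mul (hk_nonneg _ _)).symm
      simp_rw [h1]
      rw [← ofReal_integral_eq_lintegral_ofReal hint
        (.of_forall fun z => mul_nonneg (hk_nonneg _ _) (hk_nonneg _ _)), hk_conv ha hb p q]
    simp_rw [hconv]
  -- convert LHS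
  have hLHS : ENNReal.ofReal (∫ z, heatP a (I.indicator 1) z * heatP b (I.indicator 1) z)
      = ∫⁻ z, (∫⁻ p in I, ENNReal.ofReal (heatKernel a (z - p)))
          * ∫⁻ q in I, ENNReal.ofReal (heatKernel b (z - q)) := by
    rw [ofReal_integral_eq_lintegral_ofReal (heatP_mul_integrable hyx ha hb)
      (.of_forall fun z => mul_nonneg (heatP_nonneg ha.ne' z) (heatP_nonneg hb.ne' z))]
    congr 1
    funext z
    rw [ENNReal.ofReal_mul (heatP_nonneg ha.ne' z), hk_ofReal_heatP ha z, hk_ofReal_heatP hb z]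
  -- convert RHS
  have hRinner : ∀ p, ENNReal.ofReal (∫ q in I, heatKernel (a + b) (p - q))
      = ∫⁻ q in I, ENNReal.ofReal (heatKernel (a + b) (p - q)) := fun p =>
    ofReal_integral_eq_lintegral_ofReal ((hk_sub_integrable' hab p).integrableOn)
      (.of_forall fun q => hk_nonneg _ _)
  have hRint : IntegrableOn (fun p => ∫ q in I, heatKernel (a + b) (p - q)) I := by
    refine Integrable.mono' (integrable_const (1:ℝ)) ?_ ?_
    · exact ((Continuous.aestronglyMeasurable
        ((hk_cont (a + b)).comp (continuous_fst.sub continuous_snd))).integral_prod_right').restrict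
    · refine .of_forall fun p => ?_
      rw [Real.norm_of_nonneg (setIntegral_nonneg measurableSet_Icc fun q _ => hk_nonneg _ _)]
      exact (setIntegral_le_integral (hk_sub_integrable' hab p)
        (.of_forall fun q => hk_nonneg _ _)).trans (le_of_eq (hk_sub_integral' hab p))
  have hRHS : ENNReal.ofReal (∫ p in I, ∫ q in I, heatKernel (a + b) (p - q))
      = ∫⁻ p in I, ∫⁻ q in I, ENNReal.ofReal (heatKernel (a + b) (p - q)) := by
    rw [ofReal_integral_eq_lintegral_ofReal hRint
      (.of_forall fun p => setIntegral_nonneg measurableSet_Icc fun q _ => hk_nonneg _ _)]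
    congr 1
    funext p
    exact hRinner p
  have := hLHS.trans (key.trans hRHS.symm)
  exact (ENNReal.ofReal_eq_ofReal_iff hL hR).mp this

end heatPlemmas
section phiIdent

variable {y x : ℝ}

lemma hk_scale {u : ℝ} (hu : 0 < u) (z : ℝ) :
    heatKernel u (Real.sqrt u * z) = (1 / Real.sqrt u) * heatKernel 1 z := by
  unfold heatKernel
  have h1 : (Real.sqrt u * z) ^ 2 = u * z ^ 2 := by
    rw [mul_pow, Real.sq_sqrt hu.le]
  have h2 : Real.sqrt (2 * Real.pi * u) = Real.sqrt (2 * Real.pi) * Real.sqrt u := by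
    rw [← Real.sqrt_mul (by positivity)]
  rw [h1, h2]
  have h3 : -(u * z ^ 2) / (2 * u) = -z ^ 2 / (2 * 1) := by
    field_simp
  rw [h3]
  have hs : Real.sqrt u ≠ 0 := (Real.sqrt_pos.mpr hu).ne'
  have hsp : Real.sqrt (2 * Real.pi) ≠ 0 := by positivity
  field_simp

-- C3 : ∫ p in I, f (p - h) dp = mfn y x h
lemma indicator_shift_integral (hyx : y ≤ x) (h : ℝ) :
    ∫ p in Set.Icc y x, (Set.Icc y x).indicator (1 : ℝ → ℝ) (p - h) = mfn y x h := by
  have heq : ∀ p : ℝ, (Set.Icc y x).indicator (1 : ℝ → ℝ) (p - h)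
      = (Set.Icc (y + h) (x + h)).indicator (1 : ℝ → ℝ) p := by
    intro p
    simp only [Set.indicator_apply, Set.mem_Icc, Pi.one_apply]
    by_cases hp : y ≤ p - h ∧ p - h ≤ x
    · rw [if_pos hp, if_pos ⟨by linarith [hp.1], by linarith [hp.2]⟩]
    · rw [if_neg hp, if_neg (fun hc => hp ⟨by linarith [hc.1], by linarith [hc.2]⟩)]
  simp_rw [heq]
  rw [setIntegral_indicator measurableSet_Icc]
  rw [Set.Icc_inter_Icc]
  simp only [Pi.one_apply]
  rw [setIntegral_const]
  rw [Real.volume_real_Icc, smul_eq_mul, mul_one]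
  unfold mfn
  have hval : x ⊓ (x + h) - y ⊔ (y + h) = x - y - |h| := by
    rcases le_or_gt 0 h with h0 | h0
    · rw [abs_of_nonneg h0, sup_eq_right.mpr (by linarith), inf_eq_left.mpr (by linarith)]
      ring
    · rw [abs_of_neg h0, sup_eq_left.mpr (by linarith), inf_eq_right.mpr (by linarith)]
      ring
  rw [hval]

-- C1
lemma inner_subst (hyx : y ≤ x) {u : ℝ} (hu : 0 < u) (p : ℝ) :
    ∫ q in Set.Icc y x, heatKernel u (p - q)
      = ∫ z, heatKernel 1 z * (Set.Icc y x).indicator 1 (p - Real.sqrt u * z) := by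
  have hsu : 0 < Real.sqrt u := Real.sqrt_pos.mpr hu
  have step1 : ∫ q in Set.Icc y x, heatKernel u (p - q)
      = ∫ q, (Set.Icc y x).indicator (1 : ℝ → ℝ) q * heatKernel u (p - q) := by
    rw [← integral_indicator measurableSet_Icc]
    congr 1
    funext q
    by_cases hq : q ∈ Set.Icc y x <;>
      simp [Set.indicator_of_mem, Set.indicator_of_notMem, hq]
  have step2 : ∫ q, (Set.Icc y x).indicator (1 : ℝ → ℝ) q * heatKernel u (p - q)
      = ∫ w, (Set.Icc y x).indicator (1 : ℝ → ℝ) (p - w) * heatKernel u w := by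
    rw [← integral_sub_left_eq_self
      (fun q => (Set.Icc y x).indicator (1 : ℝ → ℝ) q * heatKernel u (p - q)) volume p]
    congr 1
    funext w
    simp
  have step3 : ∫ w, (Set.Icc y x).indicator (1 : ℝ → ℝ) (p - w) * heatKernel u w
      = Real.sqrt u • ∫ z, (Set.Icc y x).indicator (1 : ℝ → ℝ) (p - Real.sqrt u * z)
          * heatKernel u (Real.sqrt u * z) := by
    rw [Measure.integral_comp_mul_left
      (fun w => (Set.Icc y x).indicator (1 : ℝ → ℝ) (p - w) * heatKernel u w) (Real.sqrt u)]
    rw [smul_smul, abs_of_nonneg (by positivity : (0:ℝ) ≤ (Real.sqrt u)⁻¹)]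
    rw [mul_inv_cancel₀ hsu.ne', one_smul]
  rw [step1, step2, step3]
  rw [← integral_smul]
  congr 1
  funext z
  rw [hk_scale hu z, smul_eq_mul]
  field_simp
-- C2 : Fubini swap
lemma fubini_swap (hyx : y ≤ x) (v : ℝ) :
    ∫ p in Set.Icc y x, ∫ z, heatKernel 1 z * (Set.Icc y x).indicator 1 (p - v * z)
      = ∫ z, heatKernel 1 z * ∫ p in Set.Icc y x, (Set.Icc y x).indicator 1 (p - v * z) := by
  haveI := restr_finite (y := y) (x := x)
  have hind : Measurable ((Set.Icc y x).indicator (1 : ℝ → ℝ)) :=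
    measurable_const.indicator measurableSet_Icc
  have hmeas : AEStronglyMeasurable
      (Function.uncurry fun p z => heatKernel 1 z * (Set.Icc y x).indicator 1 (p - v * z))
      ((volume.restrict (Set.Icc y x)).prod volume) := by
    apply Measurable.aestronglyMeasurable
    exact ((hk_cont 1).measurable.comp measurable_snd).mul
      (hind.comp (measurable_fst.sub (measurable_snd.const_mul v)))
  have hintz : ∀ p : ℝ, Integrable fun z => heatKernel 1 z * (Set.Icc y x).indicator 1 (p - v * z) := by
    intro p
    have hm : AEStronglyMeasurable (fun z => (Set.Icc y x).indicator (1:ℝ→ℝ) (p - v * z)) volume :=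
      (hind.comp (measurable_const.sub (measurable_id.const_mul v))).aestronglyMeasurable
    have h := (hk_integrable one_pos).bdd_mul (c := 1) hm
      (.of_forall fun z => by
        rw [Real.norm_eq_abs]
        rcases Set.indicator_eq_zero_or_self (Set.Icc y x) (1:ℝ→ℝ) (p - v * z) with h | h <;>
          rw [h] <;> norm_num)
    simpa [mul_comm] using h
  have hint : Integrable
      (Function.uncurry fun p z => heatKernel 1 z * (Set.Icc y x).indicator 1 (p - v * z))
      ((volume.restrict (Set.Icc y x)).prod volume) := by
    rw [integrable_prod_iff hmeas]
    constructor
    · exact .of_forall fun p => hintz p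
    · refine Integrable.mono' (integrable_const (1:ℝ)) ?_ (.of_forall fun p => ?_)
      · exact (hmeas.norm.integral_prod_right')
      · rw [Real.norm_of_nonneg (integral_nonneg fun z => norm_nonneg _)]
        have : ∀ z, ‖heatKernel 1 z * (Set.Icc y x).indicator (1:ℝ→ℝ) (p - v * z)‖
            ≤ heatKernel 1 z := by
          intro z
          rw [Real.norm_eq_abs, abs_mul, abs_of_nonneg (hk_nonneg _ _)]
          rcases Set.indicator_eq_zero_or_self (Set.Icc y x) (1:ℝ→ℝ) (p - v * z) with h | h <;>
            rw [h] <;> simp [hk_nonneg 1 z]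
        calc ∫ z, ‖heatKernel 1 z * (Set.Icc y x).indicator (1:ℝ→ℝ) (p - v * z)‖
            ≤ ∫ z, heatKernel 1 z := integral_mono (hintz p).norm (hk_integrable one_pos) this
          _ = 1 := hk_integral one_pos
  have := integral_integral_swap hint
  rw [this]
  congr 1
  funext z
  rw [integral_const_mul]

lemma double_eq_phi (hyx : y ≤ x) {u : ℝ} (hu : 0 < u) :
    ∫ p in Set.Icc y x, ∫ q in Set.Icc y x, heatKernel u (p - q) = phi y x u := by
  have h1 : ∀ p, ∫ q in Set.Icc y x, heatKernel u (p - q)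
      = ∫ z, heatKernel 1 z * (Set.Icc y x).indicator 1 (p - Real.sqrt u * z) :=
    inner_subst hyx hu
  simp_rw [h1]
  rw [fubini_swap hyx (Real.sqrt u)]
  unfold phi psi
  congr 1
  funext z
  rw [indicator_shift_integral hyx (Real.sqrt u * z)]

end phiIdent
section mainbound

variable {y x : ℝ}

lemma sq_identity (hyx : y ≤ x) {c r : ℝ} (hc : 0 ≤ c) (hr : 0 < r) :
    ∫ z, (heatP (c + r) ((Set.Icc y x).indicator 1) z
        - heatP r ((Set.Icc y x).indicator 1) z) ^ 2
      = phi y x (2 * r + (c + c)) - 2 * phi y x (2 * r + c) + phi y x (2 * r + 0) := by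
  have ha : 0 < c + r := by linarith
  have hiAA := heatP_mul_integrable hyx ha ha (y := y) (x := x)
  have hiAB := heatP_mul_integrable hyx ha hr (y := y) (x := x)
  have hiBB := heatP_mul_integrable hyx hr hr (y := y) (x := x)
  have hsq : ∀ z, (heatP (c + r) ((Set.Icc y x).indicator 1) z
        - heatP r ((Set.Icc y x).indicator 1) z) ^ 2
      = (heatP (c + r) ((Set.Icc y x).indicator 1) z
          * heatP (c + r) ((Set.Icc y x).indicator 1) z
        - 2 * (heatP (c + r) ((Set.Icc y x).indicator 1) z
          * heatP r ((Set.Icc y x).indicator 1) z))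
        + heatP r ((Set.Icc y x).indicator 1) z
          * heatP r ((Set.Icc y x).indicator 1) z := by
    intro z; ring
  simp_rw [hsq]
  rw [integral_add (f := fun z => heatP (c + r) ((Set.Icc y x).indicator 1) z
        * heatP (c + r) ((Set.Icc y x).indicator 1) z
      - 2 * (heatP (c + r) ((Set.Icc y x).indicator 1) z
        * heatP r ((Set.Icc y x).indicator 1) z))
    (g := fun z => heatP r ((Set.Icc y x).indicator 1) z
        * heatP r ((Set.Icc y x).indicator 1) z)
    (by exact hiAA.sub (hiAB.const_mul 2)) hiBB]
  rw [integral_sub (f := fun z => heatP (c + r) ((Set.Icc y x).indicator 1) z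
        * heatP (c + r) ((Set.Icc y x).indicator 1) z)
    (g := fun z => 2 * (heatP (c + r) ((Set.Icc y x).indicator 1) z
        * heatP r ((Set.Icc y x).indicator 1) z)) hiAA (by exact hiAB.const_mul 2)]
  rw [integral_const_mul]
  rw [cross hyx ha ha, cross hyx ha hr, cross hyx hr hr]
  rw [double_eq_phi hyx (by linarith : (0:ℝ) < (c + r) + (c + r)),
    double_eq_phi hyx (by linarith : (0:ℝ) < (c + r) + r),
    double_eq_phi hyx (by linarith : (0:ℝ) < r + r)]
  have e1 : (c + r) + (c + r) = 2 * r + (c + c) := by ring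
  have e2 : (c + r) + r = 2 * r + c := by ring
  have e3 : r + r = 2 * r + 0 := by ring
  rw [e1, e2, e3]

lemma r_integral_bound (hyx : y ≤ x) {c s : ℝ} (hc : 0 ≤ c) (hs : 0 ≤ s) :
    (∫ r in (0:ℝ)..s, (phi y x (2 * r + (c + c)) - 2 * phi y x (2 * r + c)
        + phi y x (2 * r + 0)))
      ≤ Real.sqrt 2 * Real.sqrt c * c := by
  have hφ : Continuous (phi y x) := phi_cont hyx
  have hii : ∀ a b : ℝ, IntervalIntegrable (phi y x) volume a b :=
    fun a b => hφ.intervalIntegrable a b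
  have hcomp : ∀ d : ℝ, (∫ r in (0:ℝ)..s, phi y x (2 * r + d))
      = 2⁻¹ * ∫ u in d..(2 * s + d), phi y x u := by
    intro d
    have h := intervalIntegral.integral_comp_mul_add (a := 0) (b := s) (phi y x)
      (two_ne_zero) d
    rw [h]
    norm_num
  have hiic : ∀ d a b : ℝ, IntervalIntegrable (fun r => phi y x (2 * r + d)) volume a b :=
    fun d a b => (hφ.comp (by continuity)).intervalIntegrable a b
  have hsplit : (∫ r in (0:ℝ)..s, (phi y x (2 * r + (c + c)) - 2 * phi y x (2 * r + c)
        + phi y x (2 * r + 0)))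
      = (∫ r in (0:ℝ)..s, phi y x (2 * r + (c + c)))
        - 2 * (∫ r in (0:ℝ)..s, phi y x (2 * r + c))
        + (∫ r in (0:ℝ)..s, phi y x (2 * r + 0)) := by
    rw [intervalIntegral.integral_add (((hiic (c+c) 0 s).sub ((hiic c 0 s).const_mul 2)))
      (hiic 0 0 s), intervalIntegral.integral_sub (hiic (c+c) 0 s) ((hiic c 0 s).const_mul 2),
      intervalIntegral.integral_const_mul]
  -- Chasles rearrangement
  set J1 := ∫ u in (c + c)..(2 * s + (c + c)), phi y x u with hJ1
  set J2 := ∫ u in c..(2 * s + c), phi y x u with hJ2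
  set J3 := ∫ u in (0:ℝ)..(2 * s + 0), phi y x u with hJ3
  have e1 : (∫ u in c..(2 * s + c), phi y x u)
      + (∫ u in (2 * s + c)..(2 * s + (c + c)), phi y x u)
      = ∫ u in c..(2 * s + (c + c)), phi y x u :=
    intervalIntegral.integral_add_adjacent_intervals (hii _ _) (hii _ _)
  have e2 : (∫ u in c..(c + c), phi y x u)
      + (∫ u in (c + c)..(2 * s + (c + c)), phi y x u)
      = ∫ u in c..(2 * s + (c + c)), phi y x u :=
    intervalIntegral.integral_add_adjacent_intervals (hii _ _) (hii _ _)
  have e3 : (∫ u in (0:ℝ)..(2 * s + 0), phi y x u)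
      + (∫ u in (2 * s + 0)..(2 * s + c), phi y x u)
      = ∫ u in (0:ℝ)..(2 * s + c), phi y x u :=
    intervalIntegral.integral_add_adjacent_intervals (hii _ _) (hii _ _)
  have e4 : (∫ u in (0:ℝ)..c, phi y x u)
      + (∫ u in c..(2 * s + c), phi y x u)
      = ∫ u in (0:ℝ)..(2 * s + c), phi y x u :=
    intervalIntegral.integral_add_adjacent_intervals (hii _ _) (hii _ _)
  -- boundary differences
  have hshift1 : (∫ u in (2 * s)..(2 * s + c), phi y x (u + c))
      = ∫ u in (2 * s + c)..(2 * s + (c + c)), phi y x u := by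
    rw [intervalIntegral.integral_comp_add_right (phi y x) c]
    congr 1
    ring
  have hshift2 : (∫ u in (0:ℝ)..c, phi y x (u + c)) = ∫ u in c..(c + c), phi y x u := by
    rw [intervalIntegral.integral_comp_add_right (phi y x) c]
    congr 1
    ring
  have hbd : ∀ a : ℝ, 0 ≤ a →
      |∫ u in a..(a + c), (phi y x (u + c) - phi y x u)| ≤ Real.sqrt 2 * Real.sqrt c * c := by
    intro a ha
    have hle : a ≤ a + c := by linarith
    have hcont1 : Continuous fun u => phi y x (u + c) - phi y x u :=
      (hφ.comp (by continuity)).sub hφ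
    calc |∫ u in a..(a + c), (phi y x (u + c) - phi y x u)|
        ≤ ∫ u in a..(a + c), |phi y x (u + c) - phi y x u| :=
          intervalIntegral.abs_integral_le_integral_abs hle
      _ ≤ ∫ u in a..(a + c), (Real.sqrt 2 * Real.sqrt c) := by
          refine intervalIntegral.integral_mono_on hle
            (hcont1.abs.intervalIntegrable _ _) intervalIntegrable_const ?_
          intro u hu
          rw [Set.mem_Icc] at hu
          exact phi_diff hyx (by linarith [hu.1] : (0:ℝ) ≤ u) hc
      _ = Real.sqrt 2 * Real.sqrt c * c := by
          rw [intervalIntegral.integral_const, smul_eq_mul]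
          ring
  have hsub1 : (∫ u in (2 * s)..(2 * s + c), (phi y x (u + c) - phi y x u))
      = (∫ u in (2 * s + c)..(2 * s + (c + c)), phi y x u)
        - ∫ u in (2 * s + 0)..(2 * s + c), phi y x u := by
    rw [intervalIntegral.integral_sub (f := fun u => phi y x (u + c)) (g := phi y x)
      (by exact (hφ.comp (by continuity)).intervalIntegrable _ _) (hii _ _), hshift1]
    have h0 : (∫ u in (2 * s)..(2 * s + c), phi y x u)
        = ∫ u in (2 * s + 0)..(2 * s + c), phi y x u := by norm_num
    rw [h0]
  have hsub2 : (∫ u in (0:ℝ)..c, (phi y x (u + c) - phi y x u))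
      = (∫ u in c..(c + c), phi y x u) - ∫ u in (0:ℝ)..c, phi y x u := by
    rw [intervalIntegral.integral_sub (f := fun u => phi y x (u + c)) (g := phi y x)
      (by exact (hφ.comp (by continuity)).intervalIntegrable _ _) (hii _ _), hshift2]
  have habs1 := hbd (2 * s) (by linarith)
  have habs2 := hbd 0 le_rfl
  rw [zero_add] at habs2
  rw [hsplit, hcomp (c + c), hcomp c, hcomp 0]
  have hfin : 2⁻¹ * J1 - 2 * (2⁻¹ * J2) + 2⁻¹ * J3
      = 2⁻¹ * ((J1 - J2) - (J2 - J3)) := by ring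
  rw [hfin]
  have hgrp : (J1 - J2) - (J2 - J3)
      = (∫ u in (2 * s)..(2 * s + c), (phi y x (u + c) - phi y x u))
        - ∫ u in (0:ℝ)..c, (phi y x (u + c) - phi y x u) := by
    rw [hsub1, hsub2]
    rw [hJ1, hJ2, hJ3]
    linarith [e1, e2, e3, e4]
  rw [hgrp]
  have hc0 : (0:ℝ) ≤ Real.sqrt 2 * Real.sqrt c * c := by positivity
  have b1 := (abs_le.mp habs1).2
  have b2 := (abs_le.mp habs2).1
  linarith

end mainbound
noncomputable def scaled (N : ℝ) (f : ℝ → ℝ) (x : ℝ) : ℝ :=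
  (1 / Real.sqrt N) * f (x / N)

noncomputable def ft (f : ℝ → ℝ) (z : ℝ) : ℂ :=
  ∫ y : ℝ, (f y : ℂ) * Complex.exp (Complex.I * z * y)

theorem stmt16 (y x s t : ℝ) (hyx : y ≤ x) (hs : 0 ≤ s) (hst : s ≤ t)
    (hy0 : 0 ≤ y) (hx1 : x ≤ 1) (ht1 : t ≤ 1)
    (hxy : Real.sqrt (t - s) < x - y) :
    s * (x - y) *
        (∫ r in (0:ℝ)..s, ∫ z : ℝ,
          (heatP (t - s + r) (Set.indicator (Set.Icc y x) 1) z
            - heatP r (Set.indicator (Set.Icc y x) 1) z) ^ 2)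
      ≤ (8 / 3) * (t - s) ^ ((3 : ℝ) / 2) * (x - y)
    ∧ (8 / 3) * (t - s) ^ ((3 : ℝ) / 2) * (x - y)
      ≤ (8 / 3) * (t - s) ^ ((5 : ℝ) / 4) * (x - y) ^ ((5 : ℝ) / 4) := by
  have hc : (0:ℝ) ≤ t - s := by linarith
  have hL0 : (0:ℝ) ≤ x - y := by linarith
  have hL1 : x - y ≤ 1 := by linarith
  have hs1 : s ≤ 1 := by linarith
  have hrpow : (t - s) ^ ((3:ℝ)/2) = Real.sqrt (t - s) * (t - s) := by
    rw [show ((3:ℝ)/2) = 1/2 + 1 by norm_num, Real.rpow_add' hc (by norm_num), Real.rpow_one,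
      Real.sqrt_eq_rpow]
  constructor
  · -- main estimate
    have hcong : (∫ r in (0:ℝ)..s, ∫ z : ℝ,
          (heatP (t - s + r) (Set.indicator (Set.Icc y x) 1) z
            - heatP r (Set.indicator (Set.Icc y x) 1) z) ^ 2)
        = ∫ r in (0:ℝ)..s, (phi y x (2 * r + ((t - s) + (t - s)))
            - 2 * phi y x (2 * r + (t - s)) + phi y x (2 * r + 0)) := by
      apply intervalIntegral.integral_congr_ae
      filter_upwards with r hr
      rw [Set.uIoc_of_le hs] at hr
      exact sq_identity hyx hc hr.1
    rw [hcong]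
    have hb := r_integral_bound hyx hc hs (y := y) (x := x) (c := t - s)
    have hsL : (0:ℝ) ≤ s * (x - y) := mul_nonneg hs hL0
    have step1 : s * (x - y) * (∫ r in (0:ℝ)..s, (phi y x (2 * r + ((t - s) + (t - s)))
            - 2 * phi y x (2 * r + (t - s)) + phi y x (2 * r + 0)))
        ≤ s * (x - y) * (Real.sqrt 2 * Real.sqrt (t - s) * (t - s)) :=
      mul_le_mul_of_nonneg_left hb hsL
    refine step1.trans ?_
    rw [hrpow]
    have h2 : Real.sqrt 2 ≤ 8/3 := by
      nlinarith [Real.sq_sqrt (by norm_num : (0:ℝ) ≤ 2), Real.sqrt_nonneg 2]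
    have hP : (0:ℝ) ≤ Real.sqrt (t - s) * (t - s) := mul_nonneg (Real.sqrt_nonneg _) hc
    have hsxy : s * (x - y) ≤ 1 := by nlinarith
    calc s * (x - y) * (Real.sqrt 2 * Real.sqrt (t - s) * (t - s))
        = (s * (Real.sqrt 2 * Real.sqrt (t - s) * (t - s))) * (x - y) := by ring
      _ ≤ (1 * (Real.sqrt 2 * Real.sqrt (t - s) * (t - s))) * (x - y) := by
          refine mul_le_mul_of_nonneg_right (mul_le_mul_of_nonneg_right hs1 ?_) hL0
          positivity
      _ = Real.sqrt 2 * (Real.sqrt (t - s) * (t - s) * (x - y)) := by ring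
      _ ≤ (8/3) * (Real.sqrt (t - s) * (t - s) * (x - y)) := by
          exact mul_le_mul_of_nonneg_right h2 (by positivity)
      _ = 8 / 3 * (Real.sqrt (t - s) * (t - s)) * (x - y) := by ring
  · -- comparison of exponents
    rcases eq_or_lt_of_le hc with h0 | h0
    · rw [← h0]
      rw [Real.zero_rpow (by norm_num), Real.zero_rpow (by norm_num)]
      norm_num
    · have hLpos : (0:ℝ) < x - y := lt_of_le_of_lt (Real.sqrt_nonneg _) hxy
      have hcle : t - s ≤ x - y := by
        have h1 : t - s ≤ Real.sqrt (t - s) := by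
          rw [Real.le_sqrt hc hc]
          nlinarith
        linarith
      have hsplit1 : (t - s) ^ ((3:ℝ)/2) = (t - s) ^ ((5:ℝ)/4) * (t - s) ^ ((1:ℝ)/4) := by
        rw [← Real.rpow_add h0]
        norm_num
      have hsplit2 : (x - y) ^ ((5:ℝ)/4) = (x - y) ^ ((1:ℝ)/4) * (x - y) := by
        rw [show ((5:ℝ)/4) = 1/4 + 1 by norm_num, Real.rpow_add' hL0 (by norm_num), Real.rpow_one]
      have hle14 : (t - s) ^ ((1:ℝ)/4) ≤ (x - y) ^ ((1:ℝ)/4) :=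
        Real.rpow_le_rpow hc hcle (by norm_num)
      rw [hsplit1, hsplit2]
      have h54 : (0:ℝ) ≤ (t - s) ^ ((5:ℝ)/4) := Real.rpow_nonneg hc _
      have h14 : (0:ℝ) ≤ (t - s) ^ ((1:ℝ)/4) := Real.rpow_nonneg hc _
      have h14' : (0:ℝ) ≤ (x - y) ^ ((1:ℝ)/4) := Real.rpow_nonneg hL0 _
      nlinarith [mul_le_mul_of_nonneg_right hle14 hL0,
        mul_le_mul_of_nonneg_left (mul_le_mul_of_nonneg_right hle14 hL0) h54]
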